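/- Let G be a ternary semigroup, K a field, and V a right invariant vector subspace of the K-valued functions on G (i.e., whenever φ ∈ V and y, z ∈ G, the function x ↦ φ([xyz]) also belongs to V). Let φ, f : G → K be nonzero functions such that for each y, z ∈ G the function x ↦ φ([xyz]) − φ(x)·f(y)·f(z) belongs to V. Then either φ ∈ V, or f([xyz]) = f(x)·f(y)·f(z) for all x, y, z ∈ G. -/
import Mathlib


theorem stmt_12 {G : Type*} (op : G → G → G → G)
    (assoc : ∀ x y z u v : G,
      op (op x y z) u v = op x (op y z u) v ∧
      op x (op y z u) v = op x y (op z u v))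
    {K : Type*} [Field K]
    (V : Subspace K (G → K))
    (hV : ∀ φ : G → K, φ ∈ V → ∀ y z : G, (fun x => φ (op x y z)) ∈ V)
    (φ f : G → K) (hφ : φ ≠ 0) (hf : f ≠ 0)
    (h : ∀ y z : G, (fun x => φ (op x y z) - φ x * f y * f z) ∈ V) :
    φ ∈ V ∨ ∀ x y z : G, f (op x y z) = f x * f y * f z := by
  by_cases hφV : φ ∈ V
  · exact Or.inl hφV
  right
  -- key: for all y z u v, the scalar c = f(op y z u) f v - f y f z f u f v kills φ
  have key : ∀ y z u v : G, f (op y z u) * f v = f y * f z * f u * f v := by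
    intro y z u v
    have A := h (op y z u) v
    have B := hV _ (h u v) y z
    have C := V.smul_mem (f u * f v) (h y z)
    have D := V.sub_mem (V.add_mem B C) A
    have heq : ((fun x => (fun x => φ (op x u v) - φ x * f u * f v) (op x y z)) +
        (f u * f v) • (fun x => φ (op x y z) - φ x * f y * f z) -
        fun x => φ (op x (op y z u) v) - φ x * f (op y z u) * f v)
        = (f (op y z u) * f v - f y * f z * f u * f v) • φ := by
      funext x
      simp only [Pi.add_apply, Pi.sub_apply, Pi.smul_apply, smul_eq_mul]
      rw [(assoc x y z u v).1]
      ring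
    rw [heq] at D
    by_contra hc
    have hc' : f (op y z u) * f v - f y * f z * f u * f v ≠ 0 := sub_ne_zero.mpr hc
    have : φ ∈ V := by
      have := V.smul_mem (f (op y z u) * f v - f y * f z * f u * f v)⁻¹ D
      rwa [smul_smul, inv_mul_cancel₀ hc', one_smul] at this
    exact hφV this
  obtain ⟨v0, hv0⟩ := Function.ne_iff.mp hf
  intro x y z
  exact mul_right_cancel₀ hv0 (key x y z v0)
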